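/- There is a constant c > 0 such that for all sufficiently large n and every deterministic strategy g for the HiddenPermutation problem with n positions, there exists a secret (z,π) ∈ {0,1}^n × S_n that g does not identify within ⌊c·n·log₂ n⌋ queries; that is, at least two distinct secrets are consistent with the guessing history produced by g against (z,π) in its first ⌊c·n·log₂ n⌋ queries. -/

import Mathlib

/-- The score `f_{z,π}(x)`: the length of the longest common prefix of `x` and `z`
in the order imposed by `π` (positions are 0-indexed, so `π j` for `(j : ℕ) < i`
corresponds to the 1-indexed positions `π(1),…,π(i)`). -/
def score (n : ℕ) (z : Fin n → Bool) (π : Equiv.Perm (Fin n)) (x : Fin n → Bool) : ℕ :=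
  Nat.findGreatest (fun i => ∀ j : Fin n, (j : ℕ) < i → z (π j) = x (π j)) n

/-- The list of scores produced in the first `k` queries when the deterministic
strategy `g` plays against the secret `(z, π)`. -/
def histScores (n : ℕ) (g : List ℕ → Fin n → Bool) (z : Fin n → Bool)
    (π : Equiv.Perm (Fin n)) : ℕ → List ℕ
  | 0 => []
  | k + 1 => histScores n g z π k ++ [score n z π (g (histScores n g z π k))]

/-- `(z, π)` is the unique secret consistent with the guessing history produced by the
deterministic strategy `g` against `(z, π)` in its first `T` queries. -/
def Identifies (n : ℕ) (g : List ℕ → Fin n → Bool) (z : Fin n → Bool)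
    (π : Equiv.Perm (Fin n)) (T : ℕ) : Prop :=
  ∀ (z' : Fin n → Bool) (π' : Equiv.Perm (Fin n)),
    (∀ k < T, score n z' π' (g (histScores n g z π k)) =
        score n z π (g (histScores n g z π k))) →
    z' = z ∧ π' = π


namespace HPAdv

variable {n : ℕ}

/-- Adversary state: committed prefix (position, bit) list, plus optional lock:
a candidate set `S` together with a bit function `β`.  The semantics: `π` maps slot `i`
to the `i`-th prefix position with `z`-value the recorded bit; if locked, `π k ∈ S` with
`z = β` there, and `π (k+1) ∈ S` with `z = !β` there. -/
abbrev AState (n : ℕ) := List (Fin n × Bool) × Option (Finset (Fin n) × (Fin n → Bool))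

/-- positions not used by the prefix -/
def freeSet (ρ : List (Fin n × Bool)) : Finset (Fin n) :=
  ((ρ.map Prod.fst).toFinset)ᶜ

def stepLock (ρ : List (Fin n × Bool)) (S : Finset (Fin n)) (β : Fin n → Bool)
    (x : Fin n → Bool) : AState n × ℕ :=
  if hB : S.filter (fun q => ¬(x q = β q)) = ∅ then ((ρ, some (S, β)), ρ.length + 1)
  else if hA : S.filter (fun q => x q = β q) = ∅ then ((ρ, some (S, β)), ρ.length)
  else if (S.filter (fun q => x q = β q)).card = 1 ∧ (S.filter (fun q => ¬(x q = β q))).card = 1 then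
    ((ρ ++ [((S.filter (fun q => ¬(x q = β q))).min' (Finset.nonempty_iff_ne_empty.mpr hB),
             β ((S.filter (fun q => ¬(x q = β q))).min' (Finset.nonempty_iff_ne_empty.mpr hB))),
            ((S.filter (fun q => x q = β q)).min' (Finset.nonempty_iff_ne_empty.mpr hA),
             !(β ((S.filter (fun q => x q = β q)).min' (Finset.nonempty_iff_ne_empty.mpr hA))))],
      none), ρ.length)
  else if (S.filter (fun q => x q = β q)).card ≤ (S.filter (fun q => ¬(x q = β q))).card then
    ((ρ, some (S.filter (fun q => ¬(x q = β q)), β)), ρ.length)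
  else ((ρ, some (S.filter (fun q => x q = β q), β)), ρ.length + 1)

def stepAdv (s : AState n) (x : Fin n → Bool) : AState n × ℕ :=
  if (s.1.findIdx fun pr => x pr.1 != pr.2) < s.1.length then
    (s, s.1.findIdx fun pr => x pr.1 != pr.2)
  else
    match s.2 with
    | none => ((s.1, some (freeSet s.1, fun q => !(x q))), s.1.length)
    | some (S, β) => stepLock s.1 S β x

variable (g : List ℕ → Fin n → Bool)

/-- run the adversary against strategy `g`: state and answer list after `t` queries. -/
def runAdv : ℕ → AState n × List ℕ
  | 0 => ((([], none) : AState n), ([] : List ℕ))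
  | t + 1 =>
    let p := runAdv t
    let r := stepAdv p.1 (g p.2)
    (r.1, p.2 ++ [r.2])

def qryAt (t : ℕ) : Fin n → Bool := g (runAdv g t).2

def ansAt (t : ℕ) : ℕ := (stepAdv (runAdv g t).1 (qryAt g t)).2

lemma runAdv_succ_fst (t : ℕ) :
    (runAdv g (t+1)).1 = (stepAdv (runAdv g t).1 (qryAt g t)).1 := rfl

lemma runAdv_succ_snd (t : ℕ) :
    (runAdv g (t+1)).2 = (runAdv g t).2 ++ [ansAt g t] := rfl

/-- the family of secrets consistent with a state -/
def Fam (s : AState n) (z : Fin n → Bool) (π : Equiv.Perm (Fin n)) : Prop :=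
  (∀ (i : ℕ) (hi : i < s.1.length) (hin : i < n),
      π ⟨i, hin⟩ = (s.1[i]'hi).1 ∧ z ((s.1[i]'hi).1) = (s.1[i]'hi).2)
  ∧ ∀ S β, s.2 = some (S, β) → ∀ (hk : s.1.length < n) (hk1 : s.1.length + 1 < n),
      (π ⟨s.1.length, hk⟩ ∈ S ∧ z (π ⟨s.1.length, hk⟩) = β (π ⟨s.1.length, hk⟩))
      ∧ (π ⟨s.1.length + 1, hk1⟩ ∈ S ∧
          z (π ⟨s.1.length + 1, hk1⟩) = !(β (π ⟨s.1.length + 1, hk1⟩)))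

/-- basic structural invariant -/
structure Inv (s : AState n) : Prop where
  nodup : (s.1.map Prod.fst).Nodup
  lockDisj : ∀ S β, s.2 = some (S, β) → ∀ q ∈ S, q ∉ s.1.map Prod.fst
  lockCard : ∀ S β, s.2 = some (S, β) → 2 ≤ S.card

lemma Inv.len_le_n {s : AState n} (h : Inv s) : s.1.length ≤ n := by
  have := h.nodup.length_le_card
  simpa using this

lemma card_freeSet {ρ : List (Fin n × Bool)} (h : (ρ.map Prod.fst).Nodup) :
    (freeSet ρ).card = n - ρ.length := by
  rw [freeSet, Finset.card_compl, List.toFinset_card_of_nodup h]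
  simp

lemma lock_sub_free {s : AState n} (h : Inv s) {S β} (hs : s.2 = some (S, β)) :
    S ⊆ freeSet s.1 := by
  intro q hq
  simp only [freeSet, Finset.mem_compl, List.mem_toFinset]
  exact h.lockDisj S β hs q hq

lemma Inv.len_add_two {s : AState n} (h : Inv s) {S β} (hs : s.2 = some (S, β)) :
    s.1.length + 2 ≤ n := by
  have h1 : 2 ≤ S.card := h.lockCard S β hs
  have h2 : S.card ≤ (freeSet s.1).card := Finset.card_le_card (lock_sub_free h hs)
  rw [card_freeSet h.nodup] at h2
  have := h.len_le_n
  omega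

/-- characterize the score by its first mismatch -/
lemma score_eq_of (z : Fin n → Bool) (π : Equiv.Perm (Fin n)) (x : Fin n → Bool)
    (j : ℕ) (hj : j < n)
    (hmatch : ∀ i : Fin n, (i : ℕ) < j → z (π i) = x (π i))
    (hmis : z (π ⟨j, hj⟩) ≠ x (π ⟨j, hj⟩)) : score n z π x = j := by
  rw [score, Nat.findGreatest_eq_iff]
  refine ⟨hj.le, fun _ => hmatch, fun m hm hmn hP => ?_⟩
  exact hmis (hP ⟨j, hj⟩ hm)

/-- after a non-forced query, all prefix entries match `x` -/
lemma all_match_of_not_forced {ρ : List (Fin n × Bool)} {x : Fin n → Bool}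
    (h : ¬ (ρ.findIdx fun pr => x pr.1 != pr.2) < ρ.length) :
    ∀ pr ∈ ρ, x pr.1 = pr.2 := by
  have hle := List.findIdx_le_length (p := fun pr => x pr.1 != pr.2) (xs := ρ)
  have heq : (ρ.findIdx fun pr => x pr.1 != pr.2) = ρ.length := by omega
  intro pr hpr
  have := List.findIdx_eq_length.mp heq pr hpr
  simpa using this

/-- members match `x` on all prefix slots, if all prefix entries match `x` -/
lemma member_prefix_match {ρ : List (Fin n × Bool)} {lk} {z : Fin n → Bool}
    {π : Equiv.Perm (Fin n)} {x : Fin n → Bool}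
    (hf : Fam ((ρ, lk) : AState n) z π) (hall : ∀ pr ∈ ρ, x pr.1 = pr.2) :
    ∀ i : Fin n, (i : ℕ) < ρ.length → z (π i) = x (π i) := by
  intro i hi
  obtain ⟨h1, h2⟩ := hf.1 i hi i.isLt
  rw [Fin.eta] at h1
  rw [h1, h2]
  exact (hall _ (List.getElem_mem _)).symm

lemma score_eq_succ_of (z : Fin n → Bool) (π : Equiv.Perm (Fin n)) (x : Fin n → Bool)
    (k : ℕ) (hk : k < n) (hk1 : k + 1 < n)
    (hmatch : ∀ i : Fin n, (i : ℕ) < k → z (π i) = x (π i))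
    (hmk : z (π ⟨k, hk⟩) = x (π ⟨k, hk⟩))
    (hmis : z (π ⟨k + 1, hk1⟩) ≠ x (π ⟨k + 1, hk1⟩)) : score n z π x = k + 1 := by
  apply score_eq_of _ _ _ (k+1) hk1 _ hmis
  intro i hi
  rcases Nat.lt_or_ge (i : ℕ) k with h | h
  · exact hmatch i h
  · have : (i : ℕ) = k := by omega
    have hik : i = ⟨k, hk⟩ := Fin.ext this
    rw [hik]; exact hmk

lemma step_master (s : AState n) (x : Fin n → Bool) (hInv : Inv s)
    (hsp : s.2 = none → s.1.length + 2 ≤ n) :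
    Inv (stepAdv s x).1 ∧
      ∀ z π, Fam (stepAdv s x).1 z π →
        Fam s z π ∧ score n z π x = (stepAdv s x).2 := by
  obtain ⟨ρ, lk⟩ := s
  dsimp only at hsp ⊢
  have hnd : (ρ.map Prod.fst).Nodup := hInv.nodup
  have hlen : ρ.length ≤ n := hInv.len_le_n
  by_cases hfid : (ρ.findIdx fun pr => x pr.1 != pr.2) < ρ.length
  · -- forced answer determined by the prefix
    have hstep : stepAdv (ρ, lk) x = ((ρ, lk), ρ.findIdx fun pr => x pr.1 != pr.2) := by
      simp only [stepAdv]; rw [if_pos hfid]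
    rw [hstep]; try dsimp only
    refine ⟨hInv, fun z π hf => ⟨hf, ?_⟩⟩
    have hjn : (ρ.findIdx fun pr => x pr.1 != pr.2) < n := lt_of_lt_of_le hfid hlen
    have hmis0 : x (ρ[ρ.findIdx fun pr => x pr.1 != pr.2]'hfid).1
        ≠ (ρ[ρ.findIdx fun pr => x pr.1 != pr.2]'hfid).2 := by
      have := @List.findIdx_getElem _ (fun pr => x pr.1 != pr.2) ρ hfid
      simpa using this
    obtain ⟨hπ, hz⟩ := hf.1 _ hfid hjn
    apply score_eq_of _ _ _ _ hjn
    · intro i hi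
      have hil : (i : ℕ) < ρ.length := lt_trans hi hfid
      obtain ⟨h1, h2⟩ := hf.1 i hil i.isLt
      rw [Fin.eta] at h1
      have h3 : x (ρ[(i:ℕ)]'hil).1 = (ρ[(i:ℕ)]'hil).2 := by
        have := List.not_of_lt_findIdx (p := fun pr => x pr.1 != pr.2) (xs := ρ) hi
        simpa using this
      rw [h1, h2]; exact h3.symm
    · rw [hπ, hz]; exact fun h => hmis0 h.symm
  · -- the query matches the whole prefix
    have hall : ∀ pr ∈ ρ, x pr.1 = pr.2 := all_match_of_not_forced hfid
    cases lk with
    | none =>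
      have hstep : stepAdv (ρ, none) x
          = ((ρ, some (freeSet ρ, fun q => !(x q))), ρ.length) := by
        simp only [stepAdv]; rw [if_neg hfid]
      rw [hstep]; try dsimp only
      have hk2 : ρ.length + 2 ≤ n := hsp rfl
      constructor
      · refine ⟨hInv.nodup, ?_, ?_⟩
        · intro S β h q hq
          obtain ⟨rfl, rfl⟩ : freeSet ρ = S ∧ (fun q => !(x q)) = β := by
            injection h with h'; exact ⟨congrArg Prod.fst h', congrArg Prod.snd h'⟩
          simpa [freeSet] using hq
        · intro S β h
          obtain ⟨rfl, rfl⟩ : freeSet ρ = S ∧ (fun q => !(x q)) = β := by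
            injection h with h'; exact ⟨congrArg Prod.fst h', congrArg Prod.snd h'⟩
          rw [card_freeSet hnd]; omega
      · intro z π hf
        obtain ⟨hpre, hlock⟩ := hf
        have hfam : Fam ((ρ, none) : AState n) z π := by
          refine ⟨hpre, ?_⟩
          intro S β h; cases h
        refine ⟨hfam, ?_⟩
        have hk : ρ.length < n := by omega
        obtain ⟨⟨hmem, hzb⟩, -⟩ := hlock (freeSet ρ) (fun q => !(x q)) rfl hk (by dsimp only; omega)
        apply score_eq_of _ _ _ ρ.length hk
        · exact member_prefix_match hfam hall
        · rw [hzb]; simp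
    | some Sβ =>
      obtain ⟨S, β⟩ := Sβ
      have hstep0 : stepAdv (ρ, some (S, β)) x = stepLock ρ S β x := by
        simp only [stepAdv]; rw [if_neg hfid]
      rw [hstep0]; try dsimp only
      have hk2 : ρ.length + 2 ≤ n := hInv.len_add_two rfl
      have hk : ρ.length < n := by omega
      have hk1 : ρ.length + 1 < n := by omega
      by_cases hB : S.filter (fun q => ¬(x q = β q)) = ∅
      · -- answer k+1, no change
        have hstep : stepLock ρ S β x = ((ρ, some (S, β)), ρ.length + 1) := by
          rw [stepLock, dif_pos hB]
        rw [hstep]; try dsimp only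
        refine ⟨hInv, fun z π hf => ⟨hf, ?_⟩⟩
        obtain ⟨⟨hm0, hz0⟩, ⟨hm1, hz1⟩⟩ := hf.2 S β rfl hk hk1
        have hxβ : ∀ q ∈ S, x q = β q := by
          intro q hq
          by_contra hne
          exact (Finset.filter_eq_empty_iff.mp hB hq) hne
        apply score_eq_succ_of _ _ _ _ hk hk1 (member_prefix_match hf hall)
        · rw [hz0]; exact (hxβ _ hm0).symm
        · rw [hz1, hxβ _ hm1]; simp
      · by_cases hA : S.filter (fun q => x q = β q) = ∅
        · -- answer k, no change
          have hstep : stepLock ρ S β x = ((ρ, some (S, β)), ρ.length) := by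
            rw [stepLock, dif_neg hB, dif_pos hA]
          rw [hstep]; try dsimp only
          refine ⟨hInv, fun z π hf => ⟨hf, ?_⟩⟩
          obtain ⟨⟨hm0, hz0⟩, -⟩ := hf.2 S β rfl hk hk1
          have hxβ : ∀ q ∈ S, ¬ (x q = β q) := by
            intro q hq
            exact Finset.filter_eq_empty_iff.mp hA hq
          apply score_eq_of _ _ _ ρ.length hk (member_prefix_match hf hall)
          rw [hz0]; exact fun h => (hxβ _ hm0) h.symm
        · have hAne : (S.filter (fun q => x q = β q)).Nonempty :=
            Finset.nonempty_iff_ne_empty.mpr hA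
          have hBne : (S.filter (fun q => ¬(x q = β q))).Nonempty :=
            Finset.nonempty_iff_ne_empty.mpr hB
          by_cases hab : (S.filter (fun q => x q = β q)).card = 1
              ∧ (S.filter (fun q => ¬(x q = β q))).card = 1
          · -- commit
            set a := (S.filter (fun q => x q = β q)).min' hAne with ha
            set b := (S.filter (fun q => ¬(x q = β q))).min' hBne with hb
            have hstep : stepLock ρ S β x
                = ((ρ ++ [(b, β b), (a, !(β a))], none), ρ.length) := by
              rw [stepLock, dif_neg hB, dif_neg hA, if_pos hab]
            rw [hstep]; try dsimp only
            have haS : a ∈ S ∧ x a = β a := by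
              have := Finset.min'_mem _ hAne
              rw [← ha] at this
              exact Finset.mem_filter.mp this
            have hbS : b ∈ S ∧ ¬ (x b = β b) := by
              have := Finset.min'_mem _ hBne
              rw [← hb] at this
              exact Finset.mem_filter.mp this
            have hba : b ≠ a := by
              intro h; rw [h] at hbS; exact hbS.2 haS.2
            have hlen2 : (ρ ++ [(b, β b), (a, !(β a))]).length = ρ.length + 2 := by
              simp
            have hget0 : ∀ (h : ρ.length < (ρ ++ [(b, β b), (a, !(β a))]).length),
                (ρ ++ [(b, β b), (a, !(β a))])[ρ.length]'h = (b, β b) := by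
              intro h
              rw [List.getElem_append_right (le_refl ρ.length)]
              simp
            have hget1 : ∀ (h : ρ.length + 1 < (ρ ++ [(b, β b), (a, !(β a))]).length),
                (ρ ++ [(b, β b), (a, !(β a))])[ρ.length + 1]'h = (a, !(β a)) := by
              intro h
              rw [List.getElem_append_right (by omega : ρ.length ≤ ρ.length + 1)]
              simp
            constructor
            · refine ⟨?_, ?_, ?_⟩
              · rw [List.map_append, List.nodup_append]
                refine ⟨hInv.nodup, by simpa using hba, ?_⟩
                intro q hq q' hq' hqq
                have : q' = b ∨ q' = a := by simpa using hq'
                rcases this with h | h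
                · rw [hqq, h] at hq; exact hInv.lockDisj S β rfl _ hbS.1 hq
                · rw [hqq, h] at hq; exact hInv.lockDisj S β rfl _ haS.1 hq
              · intro S' β' h; cases h
              · intro S' β' h; cases h
            · intro z π hf
              obtain ⟨hpre, -⟩ := hf
              have hpre0 := hpre ρ.length (by simp) hk
              rw [hget0] at hpre0
              have hpre1 := hpre (ρ.length + 1) (by simp) hk1
              rw [hget1] at hpre1
              have hfam : Fam ((ρ, some (S, β)) : AState n) z π := by
                constructor
                · intro i hi hin
                  have := hpre i (by dsimp only at hi ⊢; simp only [List.length_append, List.length_cons, List.length_nil]; omega) hin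
                  rwa [List.getElem_append_left hi] at this
                · intro S' β' h hk' hk1'
                  obtain ⟨rfl, rfl⟩ : S = S' ∧ β = β' := by
                    injection h with h'; exact ⟨congrArg Prod.fst h', congrArg Prod.snd h'⟩
                  refine ⟨⟨?_, ?_⟩, ?_, ?_⟩
                  · rw [hpre0.1]; exact hbS.1
                  · rw [hpre0.1, hpre0.2]
                  · rw [hpre1.1]; exact haS.1
                  · rw [hpre1.1, hpre1.2]
              refine ⟨hfam, ?_⟩
              apply score_eq_of _ _ _ ρ.length hk (member_prefix_match hfam hall)
              rw [hpre0.1, hpre0.2]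
              exact fun h => hbS.2 h.symm
          · -- shrink to the bigger side
            by_cases hle : (S.filter (fun q => x q = β q)).card
                ≤ (S.filter (fun q => ¬(x q = β q))).card
            · -- keep B, answer k
              have hstep : stepLock ρ S β x
                  = ((ρ, some (S.filter (fun q => ¬(x q = β q)), β)), ρ.length) := by
                rw [stepLock, dif_neg hB, dif_neg hA, if_neg hab, if_pos hle]
              rw [hstep]; try dsimp only
              constructor
              · refine ⟨hInv.nodup, ?_, ?_⟩
                · intro S' β' h q hq
                  obtain ⟨rfl, rfl⟩ : S.filter (fun q => ¬(x q = β q)) = S' ∧ β = β' := by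
                    injection h with h'; exact ⟨congrArg Prod.fst h', congrArg Prod.snd h'⟩
                  exact hInv.lockDisj S β rfl q (Finset.mem_filter.mp hq).1
                · intro S' β' h
                  obtain ⟨rfl, rfl⟩ : S.filter (fun q => ¬(x q = β q)) = S' ∧ β = β' := by
                    injection h with h'; exact ⟨congrArg Prod.fst h', congrArg Prod.snd h'⟩
                  have h1 : 1 ≤ (S.filter (fun q => x q = β q)).card :=
                    Finset.card_pos.mpr hAne
                  have h2 : 1 ≤ (S.filter (fun q => ¬(x q = β q))).card :=
                    Finset.card_pos.mpr hBne
                  omega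
              · intro z π hf
                obtain ⟨hpre, hlock⟩ := hf
                obtain ⟨⟨hm0, hz0⟩, ⟨hm1, hz1⟩⟩ :=
                  hlock (S.filter (fun q => ¬(x q = β q))) β rfl hk hk1
                have hfam : Fam ((ρ, some (S, β)) : AState n) z π := by
                  refine ⟨hpre, ?_⟩
                  intro S' β' h hk' hk1'
                  obtain ⟨rfl, rfl⟩ : S = S' ∧ β = β' := by
                    injection h with h'; exact ⟨congrArg Prod.fst h', congrArg Prod.snd h'⟩
                  exact ⟨⟨(Finset.mem_filter.mp hm0).1, hz0⟩,
                         ⟨(Finset.mem_filter.mp hm1).1, hz1⟩⟩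
                refine ⟨hfam, ?_⟩
                apply score_eq_of _ _ _ ρ.length hk (member_prefix_match hfam hall)
                rw [hz0]
                exact fun h => (Finset.mem_filter.mp hm0).2 h.symm
            · -- keep A, answer k+1
              have hstep : stepLock ρ S β x
                  = ((ρ, some (S.filter (fun q => x q = β q), β)), ρ.length + 1) := by
                rw [stepLock, dif_neg hB, dif_neg hA, if_neg hab, if_neg hle]
              rw [hstep]; try dsimp only
              constructor
              · refine ⟨hInv.nodup, ?_, ?_⟩
                · intro S' β' h q hq
                  obtain ⟨rfl, rfl⟩ : S.filter (fun q => x q = β q) = S' ∧ β = β' := by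
                    injection h with h'; exact ⟨congrArg Prod.fst h', congrArg Prod.snd h'⟩
                  exact hInv.lockDisj S β rfl q (Finset.mem_filter.mp hq).1
                · intro S' β' h
                  obtain ⟨rfl, rfl⟩ : S.filter (fun q => x q = β q) = S' ∧ β = β' := by
                    injection h with h'; exact ⟨congrArg Prod.fst h', congrArg Prod.snd h'⟩
                  have h2 : 1 ≤ (S.filter (fun q => ¬(x q = β q))).card :=
                    Finset.card_pos.mpr hBne
                  omega
              · intro z π hf
                obtain ⟨hpre, hlock⟩ := hf
                obtain ⟨⟨hm0, hz0⟩, ⟨hm1, hz1⟩⟩ :=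
                  hlock (S.filter (fun q => x q = β q)) β rfl hk hk1
                have hfam : Fam ((ρ, some (S, β)) : AState n) z π := by
                  refine ⟨hpre, ?_⟩
                  intro S' β' h hk' hk1'
                  obtain ⟨rfl, rfl⟩ : S = S' ∧ β = β' := by
                    injection h with h'; exact ⟨congrArg Prod.fst h', congrArg Prod.snd h'⟩
                  exact ⟨⟨(Finset.mem_filter.mp hm0).1, hz0⟩,
                         ⟨(Finset.mem_filter.mp hm1).1, hz1⟩⟩
                refine ⟨hfam, ?_⟩
                apply score_eq_succ_of _ _ _ _ hk hk1 (member_prefix_match hfam hall)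
                · rw [hz0]; exact ((Finset.mem_filter.mp hm0).2).symm
                · rw [hz1, (Finset.mem_filter.mp hm1).2]; simp

/-- counting invariant: prefix length `k` can only grow slowly.
In the unlocked state it says `k·D ≤ 4t`; in the locked state it additionally
accounts for the progress of halving the candidate set. -/
def CountInv (s : AState n) (D t : ℕ) : Prop :=
  match s.2 with
  | none => s.1.length * D ≤ 4 * t
  | some (S, _) => (n - s.1.length)^2 * 2^(s.1.length * D) ≤ S.card^2 * 2^(4*t)

lemma CountInv.mono {s : AState n} {D t : ℕ} (h : CountInv s D t) : CountInv s D (t+1) := by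
  obtain ⟨ρ, lk⟩ := s
  cases lk with
  | none =>
    have h' : ρ.length * D ≤ 4 * t := h
    show ρ.length * D ≤ 4 * (t+1)
    omega
  | some Sβ =>
    obtain ⟨S, β⟩ := Sβ
    have h' : (n - ρ.length)^2 * 2^(ρ.length * D) ≤ S.card^2 * 2^(4*t) := h
    show (n - ρ.length)^2 * 2^(ρ.length * D) ≤ S.card^2 * 2^(4*(t+1))
    calc (n - ρ.length)^2 * 2^(ρ.length * D) ≤ S.card^2 * 2^(4*t) := h'
    _ ≤ S.card^2 * 2^(4*(t+1)) := by
        apply Nat.mul_le_mul_left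
        apply Nat.pow_le_pow_right (by norm_num)
        omega

lemma kD_le_of_count {s : AState n} (hInv : Inv s) {D t : ℕ}
    (hC : CountInv s D t) : s.1.length * D ≤ 4 * t := by
  obtain ⟨ρ, lk⟩ := s
  cases lk with
  | none => exact hC
  | some Sβ =>
    obtain ⟨S, β⟩ := Sβ
    have h' : (n - ρ.length)^2 * 2^(ρ.length * D) ≤ S.card^2 * 2^(4*t) := hC
    have hsub : S ⊆ freeSet ρ := lock_sub_free hInv rfl
    have hcard : S.card ≤ n - ρ.length := by
      have := Finset.card_le_card hsub
      rwa [card_freeSet hInv.nodup] at this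
    have hpos : 0 < S.card := by
      have := hInv.lockCard S β rfl; omega
    have h2 : S.card^2 * 2^(ρ.length * D) ≤ S.card^2 * 2^(4*t) := by
      calc S.card^2 * 2^(ρ.length * D) ≤ (n - ρ.length)^2 * 2^(ρ.length * D) := by
            apply Nat.mul_le_mul_right
            exact Nat.pow_le_pow_left hcard 2
      _ ≤ S.card^2 * 2^(4*t) := h'
    have h3 : (2:ℕ)^(ρ.length * D) ≤ 2^(4*t) := by
      have hpos2 : 0 < S.card^2 := by positivity
      exact Nat.le_of_mul_le_mul_left (by linarith [h2]) hpos2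
    have := (Nat.pow_le_pow_iff_right (by norm_num : 1 < 2)).mp h3
    show ρ.length * D ≤ 4 * t
    omega

lemma step_count (s : AState n) (x : Fin n → Bool) (hInv : Inv s) {D t : ℕ}
    (hC : CountInv s D t) (hpow : 2^(D+1) ≤ n - s.1.length) :
    CountInv (stepAdv s x).1 D (t+1) := by
  obtain ⟨ρ, lk⟩ := s
  dsimp only at hC hpow ⊢
  have hnd : (ρ.map Prod.fst).Nodup := hInv.nodup
  by_cases hfid : (ρ.findIdx fun pr => x pr.1 != pr.2) < ρ.length
  · have hstep : stepAdv (ρ, lk) x = ((ρ, lk), ρ.findIdx fun pr => x pr.1 != pr.2) := by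
      simp only [stepAdv]; rw [if_pos hfid]
    rw [hstep]
    exact hC.mono
  · cases lk with
    | none =>
      have hstep : stepAdv (ρ, none) x
          = ((ρ, some (freeSet ρ, fun q => !(x q))), ρ.length) := by
        simp only [stepAdv]; rw [if_neg hfid]
      rw [hstep]
      have hfr : ρ.length * D ≤ 4 * t := hC
      show (n - ρ.length)^2 * 2^(ρ.length * D) ≤ (freeSet ρ).card^2 * 2^(4*(t+1))
      rw [card_freeSet hnd]
      apply Nat.mul_le_mul_left
      apply Nat.pow_le_pow_right (by norm_num)
      omega
    | some Sβ =>
      obtain ⟨S, β⟩ := Sβ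
      have hstep0 : stepAdv (ρ, some (S, β)) x = stepLock ρ S β x := by
        simp only [stepAdv]; rw [if_neg hfid]
      rw [hstep0]
      have hC' : (n - ρ.length)^2 * 2^(ρ.length * D) ≤ S.card^2 * 2^(4*t) := hC
      by_cases hB : S.filter (fun q => ¬(x q = β q)) = ∅
      · have hstep : stepLock ρ S β x = ((ρ, some (S, β)), ρ.length + 1) := by
          rw [stepLock, dif_pos hB]
        rw [hstep]; exact hC.mono
      · by_cases hA : S.filter (fun q => x q = β q) = ∅
        · have hstep : stepLock ρ S β x = ((ρ, some (S, β)), ρ.length) := by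
            rw [stepLock, dif_neg hB, dif_pos hA]
          rw [hstep]; exact hC.mono
        · have hAne : (S.filter (fun q => x q = β q)).Nonempty :=
            Finset.nonempty_iff_ne_empty.mpr hA
          have hBne : (S.filter (fun q => ¬(x q = β q))).Nonempty :=
            Finset.nonempty_iff_ne_empty.mpr hB
          have hcardsum : (S.filter (fun q => x q = β q)).card
              + (S.filter (fun q => ¬(x q = β q))).card = S.card :=
            Finset.card_filter_add_card_filter_not _
          by_cases hab : (S.filter (fun q => x q = β q)).card = 1
              ∧ (S.filter (fun q => ¬(x q = β q))).card = 1
          · -- commit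
            set a := (S.filter (fun q => x q = β q)).min' hAne with ha
            set b := (S.filter (fun q => ¬(x q = β q))).min' hBne with hb
            have hstep : stepLock ρ S β x
                = ((ρ ++ [(b, β b), (a, !(β a))], none), ρ.length) := by
              rw [stepLock, dif_neg hB, dif_neg hA, if_pos hab]
            rw [hstep]
            show (ρ ++ [(b, β b), (a, !(β a))]).length * D ≤ 4 * (t+1)
            have hlen2 : (ρ ++ [(b, β b), (a, !(β a))]).length = ρ.length + 2 := by simp
            rw [hlen2]
            have hS2 : S.card = 2 := by omega
            rw [hS2] at hC'
            have hle : (2^(D+1))^2 * 2^(ρ.length * D) ≤ (n - ρ.length)^2 * 2^(ρ.length*D) := by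
              apply Nat.mul_le_mul_right
              exact Nat.pow_le_pow_left hpow 2
            have hle2 : (2:ℕ)^(2*(D+1) + ρ.length*D) ≤ 2^(4*t + 2) := by
              calc (2:ℕ)^(2*(D+1) + ρ.length*D) = (2^(D+1))^2 * 2^(ρ.length*D) := by
                    rw [pow_add, ← pow_mul, Nat.mul_comm (D+1) 2]
              _ ≤ (n - ρ.length)^2 * 2^(ρ.length*D) := hle
              _ ≤ 2^2 * 2^(4*t) := by simpa using hC'
              _ = 2^(4*t + 2) := by rw [← pow_add, Nat.add_comm]
            have := (Nat.pow_le_pow_iff_right (by norm_num : 1 < 2)).mp hle2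
            have hgoal : (ρ.length + 2) * D ≤ 4*t + 2 := by nlinarith
            omega
          · by_cases hle : (S.filter (fun q => x q = β q)).card
                ≤ (S.filter (fun q => ¬(x q = β q))).card
            · have hstep : stepLock ρ S β x
                  = ((ρ, some (S.filter (fun q => ¬(x q = β q)), β)), ρ.length) := by
                rw [stepLock, dif_neg hB, dif_neg hA, if_neg hab, if_pos hle]
              rw [hstep]
              show (n - ρ.length)^2 * 2^(ρ.length * D)
                  ≤ (S.filter (fun q => ¬(x q = β q))).card^2 * 2^(4*(t+1))
              calc (n - ρ.length)^2 * 2^(ρ.length * D) ≤ S.card^2 * 2^(4*t) := hC'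
              _ ≤ (2 * (S.filter (fun q => ¬(x q = β q))).card)^2 * 2^(4*t) := by
                  apply Nat.mul_le_mul_right
                  apply Nat.pow_le_pow_left
                  omega
              _ ≤ (S.filter (fun q => ¬(x q = β q))).card^2 * 2^(4*(t+1)) := by
                  rw [mul_pow]
                  rw [Nat.mul_comm ((2:ℕ)^2) _, Nat.mul_assoc, ← pow_add]
                  apply Nat.mul_le_mul_left
                  apply Nat.pow_le_pow_right (by norm_num)
                  omega
            · have hstep : stepLock ρ S β x
                  = ((ρ, some (S.filter (fun q => x q = β q), β)), ρ.length + 1) := by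
                rw [stepLock, dif_neg hB, dif_neg hA, if_neg hab, if_neg hle]
              rw [hstep]
              show (n - ρ.length)^2 * 2^(ρ.length * D)
                  ≤ (S.filter (fun q => x q = β q)).card^2 * 2^(4*(t+1))
              calc (n - ρ.length)^2 * 2^(ρ.length * D) ≤ S.card^2 * 2^(4*t) := hC'
              _ ≤ (2 * (S.filter (fun q => x q = β q)).card)^2 * 2^(4*t) := by
                  apply Nat.mul_le_mul_right
                  apply Nat.pow_le_pow_left
                  omega
              _ ≤ (S.filter (fun q => x q = β q)).card^2 * 2^(4*(t+1)) := by
                  rw [mul_pow]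
                  rw [Nat.mul_comm ((2:ℕ)^2) _, Nat.mul_assoc, ← pow_add]
                  apply Nat.mul_le_mul_left
                  apply Nat.pow_le_pow_right (by norm_num)
                  omega

section Grand

variable {D T : ℕ}

/-- the grand induction: along the run, the structural and counting invariants hold. -/
lemma grand (hD : 1 ≤ D) (hTD : 8 * T < n * D) (hpow2 : 2^(D+2) ≤ n) :
    ∀ t, t ≤ T → Inv (runAdv g t).1 ∧ CountInv (runAdv g t).1 D t := by
  intro t
  induction t with
  | zero =>
    intro _
    refine ⟨⟨?_, ?_, ?_⟩, ?_⟩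
    · show (([] : List (Fin n × Bool)).map Prod.fst).Nodup
      simp
    · intro S β h
      exact absurd h (by show (none : Option _) ≠ _; simp)
    · intro S β h
      exact absurd h (by show (none : Option _) ≠ _; simp)
    · show ([] : List (Fin n × Bool)).length * D ≤ 4 * 0
      simp
  | succ t ih =>
    intro ht
    obtain ⟨hInv, hC⟩ := ih (by omega)
    have hkD : (runAdv g t).1.1.length * D ≤ 4 * t := kD_le_of_count hInv hC
    have h2k : 2 * (runAdv g t).1.1.length < n := by
      have h1 : 2 * ((runAdv g t).1.1.length * D) ≤ 8 * t := by omega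
      have h2 : 8 * t < n * D := by
        have : 8 * t ≤ 8 * T := by omega
        omega
      have h3 : (2 * (runAdv g t).1.1.length) * D < n * D := by
        calc (2 * (runAdv g t).1.1.length) * D = 2 * ((runAdv g t).1.1.length * D) := by ring
        _ ≤ 8 * t := h1
        _ < n * D := h2
      exact Nat.lt_of_mul_lt_mul_right h3
    have hn4 : 4 ≤ n := by
      have : (2:ℕ)^(D+2) ≥ 2^3 := Nat.pow_le_pow_right (by norm_num) (by omega)
      have := hpow2
      omega
    have hsp : (runAdv g t).1.2 = none → (runAdv g t).1.1.length + 2 ≤ n := by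
      intro _; omega
    have hpow : 2^(D+1) ≤ n - (runAdv g t).1.1.length := by
      have hp : 2 * 2^(D+1) = 2^(D+2) := by rw [pow_succ]; ring
      omega
    rw [runAdv_succ_fst]
    exact ⟨(step_master _ _ hInv hsp).1, step_count _ _ hInv hC hpow⟩

/-- one backward step: members of the later family are members of the earlier one,
and they give the recorded answer. -/
lemma back_step (hD : 1 ≤ D) (hTD : 8 * T < n * D) (hpow2 : 2^(D+2) ≤ n)
    {z : Fin n → Bool} {π : Equiv.Perm (Fin n)} (t : ℕ) (ht : t + 1 ≤ T)
    (hf : Fam (runAdv g (t+1)).1 z π) :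
    Fam (runAdv g t).1 z π ∧ score n z π (qryAt g t) = ansAt g t := by
  obtain ⟨hInv, hC⟩ := grand g hD hTD hpow2 t (by omega)
  have hkD : (runAdv g t).1.1.length * D ≤ 4 * t := kD_le_of_count hInv hC
  have h2k : 2 * (runAdv g t).1.1.length < n := by
    have h3 : (2 * (runAdv g t).1.1.length) * D < n * D := by
      calc (2 * (runAdv g t).1.1.length) * D = 2 * ((runAdv g t).1.1.length * D) := by ring
      _ ≤ 8 * t := by omega
      _ < n * D := by
          have : 8 * t ≤ 8 * T := by omega
          omega
    exact Nat.lt_of_mul_lt_mul_right h3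
  have hn4 : 4 ≤ n := by
    have : (2:ℕ)^(D+2) ≥ 2^3 := Nat.pow_le_pow_right (by norm_num) (by omega)
    omega
  have hsp : (runAdv g t).1.2 = none → (runAdv g t).1.1.length + 2 ≤ n := by
    intro _; omega
  have := (step_master (runAdv g t).1 (qryAt g t) hInv hsp).2 z π
    (by rw [← runAdv_succ_fst]; exact hf)
  exact this

lemma fam_all (hD : 1 ≤ D) (hTD : 8 * T < n * D) (hpow2 : 2^(D+2) ≤ n)
    {z : Fin n → Bool} {π : Equiv.Perm (Fin n)} (hf : Fam (runAdv g T).1 z π) :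
    ∀ t, t ≤ T → Fam (runAdv g t).1 z π := by
  have key : ∀ m t, t + m = T → Fam (runAdv g t).1 z π ∨ True → t + m = T →
      Fam (runAdv g (t+m)).1 z π → Fam (runAdv g t).1 z π := by
    intro m
    induction m with
    | zero => intro t _ _ _ h; simpa using h
    | succ m ih =>
      intro t hm _ _ h
      have h1 : Fam (runAdv g (t+1)).1 z π := by
        have := ih (t+1) (by omega) (Or.inr trivial) (by omega)
          (by rw [show t + 1 + m = t + (m+1) by omega]; exact h)
        exact this
      exact (back_step g hD hTD hpow2 t (by omega) h1).1
  intro t ht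
  have := key (T - t) t (by omega) (Or.inr trivial) (by omega)
    (by rw [show t + (T - t) = T by omega]; exact hf)
  exact this

lemma score_all (hD : 1 ≤ D) (hTD : 8 * T < n * D) (hpow2 : 2^(D+2) ≤ n)
    {z : Fin n → Bool} {π : Equiv.Perm (Fin n)} (hf : Fam (runAdv g T).1 z π) :
    ∀ t, t < T → score n z π (qryAt g t) = ansAt g t := by
  intro t ht
  exact (back_step g hD hTD hpow2 t (by omega)
    (fam_all g hD hTD hpow2 hf (t+1) (by omega))).2

end Grand

section Ext

/-- extend a nodup list of positions to a full enumeration of `Fin n` -/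
def extList (l : List (Fin n)) : List (Fin n) :=
  l ++ (List.finRange n).filter (fun q => q ∉ l)

lemma extList_nodup {l : List (Fin n)} (hl : l.Nodup) : (extList l).Nodup := by
  rw [extList, List.nodup_append]
  refine ⟨hl, (List.nodup_finRange n).filter _, ?_⟩
  intro q hq q' hq' hqq
  have := List.mem_filter.mp hq'
  simp only [decide_not, Bool.not_eq_true', decide_eq_false_iff_not] at this
  rw [hqq] at hq
  exact this.2 hq

lemma extList_complete {l : List (Fin n)} (q : Fin n) : q ∈ extList l := by
  rw [extList, List.mem_append]
  by_cases h : q ∈ l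
  · exact Or.inl h
  · refine Or.inr (List.mem_filter.mpr ⟨List.mem_finRange q, ?_⟩)
    simpa using h

lemma extList_length {l : List (Fin n)} (hl : l.Nodup) : (extList l).length = n := by
  have h1 : (extList l).toFinset.card = (extList l).length :=
    List.toFinset_card_of_nodup (extList_nodup hl)
  have h2 : (extList l).toFinset = Finset.univ := by
    ext q; simp [extList_complete]
  rw [h2] at h1
  simpa using h1.symm

/-- a permutation of `Fin n` sending slot `i` to the `i`-th entry of `l` -/
noncomputable def extPerm (l : List (Fin n)) (hl : l.Nodup) : Equiv.Perm (Fin n) :=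
  Equiv.ofBijective
    (fun i => (extList l).get (Fin.cast (extList_length hl).symm i))
    (by
      have hinj : Function.Injective (extList l).get :=
        List.nodup_iff_injective_get.mp (extList_nodup hl)
      have : Function.Injective
          (fun i : Fin n => (extList l).get (Fin.cast (extList_length hl).symm i)) := by
        intro a b h
        have hv := congrArg Fin.val (hinj h)
        simp only [Fin.coe_cast] at hv
        exact Fin.ext hv
      exact Finite.injective_iff_bijective.mp this)

lemma extPerm_apply {l : List (Fin n)} (hl : l.Nodup) (i : ℕ) (hil : i < l.length)
    (hin : i < n) : extPerm l hl ⟨i, hin⟩ = l[i]'hil := by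
  show (extList l).get (Fin.cast (extList_length hl).symm ⟨i, hin⟩) = l[i]'hil
  rw [List.get_eq_getElem]
  show (l ++ (List.finRange n).filter (fun q => q ∉ l))[(⟨i, hin⟩ : Fin n).val]'_ = l[i]'hil
  simp only [Fin.coe_cast, Fin.val_mk]
  exact List.getElem_append_left hil

end Ext

/-- from any reachable state with small prefix, extract two distinct consistent secrets -/
lemma exists_two (s : AState n) (hInv : Inv s) (hk2 : s.1.length + 2 < n) :
    ∃ (z z' : Fin n → Bool) (π : Equiv.Perm (Fin n)), Fam s z π ∧ Fam s z' π ∧ z ≠ z' := by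
  obtain ⟨ρ, lk⟩ := s
  dsimp only at hk2 ⊢
  have hnd : (ρ.map Prod.fst).Nodup := hInv.nodup
  cases lk with
  | none =>
    have hllen : (ρ.map Prod.fst).length = ρ.length := by simp
    set π := extPerm (ρ.map Prod.fst) hnd with hπ
    have hkn : ρ.length < n := by omega
    set w : Fin n → Bool := fun i =>
      if h : (i : ℕ) < ρ.length then (ρ[(i:ℕ)]'h).2 else true with hw
    set w' : Fin n → Bool := Function.update w ⟨ρ.length, hkn⟩ false with hw'
    have hwweq : ∀ i : Fin n, (i : ℕ) < ρ.length → w' i = w i := by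
      intro i hi
      rw [hw']
      apply Function.update_of_ne
      intro hc
      have := congrArg Fin.val hc
      simp only [Fin.val_mk] at this
      omega
    have hwlow : ∀ (i : ℕ) (hi : i < ρ.length) (hin : i < n),
        w ⟨i, hin⟩ = (ρ[i]'hi).2 := by
      intro i hi hin
      show (if h : ((⟨i, hin⟩ : Fin n) : ℕ) < ρ.length then (ρ[((⟨i, hin⟩ : Fin n) : ℕ)]'h).2
        else true) = (ρ[i]'hi).2
      simp only [Fin.val_mk, dif_pos hi]
    have hprefix : ∀ (wf : Fin n → Bool),
        (∀ i : Fin n, (i : ℕ) < ρ.length → wf i = w i) →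
        (∀ (i : ℕ) (hi : i < ρ.length) (hin : i < n),
          π ⟨i, hin⟩ = (ρ[i]'hi).1 ∧ (fun p => wf (π.symm p)) ((ρ[i]'hi).1) = (ρ[i]'hi).2) := by
      intro wf hwf i hi hin
      have hπi : π ⟨i, hin⟩ = (ρ[i]'hi).1 := by
        rw [hπ, extPerm_apply hnd i (by omega : i < (ρ.map Prod.fst).length) hin]
        simp
      refine ⟨hπi, ?_⟩
      have hsymm : π.symm ((ρ[i]'hi).1) = ⟨i, hin⟩ := by
        rw [← hπi]; exact Equiv.symm_apply_apply π _
      show wf (π.symm ((ρ[i]'hi).1)) = (ρ[i]'hi).2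
      rw [hsymm, hwf ⟨i, hin⟩ (by simpa using hi)]
      exact hwlow i hi hin
    refine ⟨fun p => w (π.symm p), fun p => w' (π.symm p), π, ?_, ?_, ?_⟩
    · refine ⟨fun i hi hin => hprefix w (fun _ _ => rfl) i hi hin, ?_⟩
      intro S β h; exact absurd h (by simp)
    · refine ⟨fun i hi hin => hprefix w' hwweq i hi hin, ?_⟩
      intro S β h; exact absurd h (by simp)
    · intro hcontra
      have heq := congrFun hcontra (π ⟨ρ.length, hkn⟩)
      rw [Equiv.symm_apply_apply] at heq
      have h1 : w ⟨ρ.length, hkn⟩ = true := by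
        show (if h : ((⟨ρ.length, hkn⟩ : Fin n) : ℕ) < ρ.length
          then (ρ[((⟨ρ.length, hkn⟩ : Fin n) : ℕ)]'h).2 else true) = true
        simp
      have h2 : w' ⟨ρ.length, hkn⟩ = false := by
        rw [hw']; exact Function.update_self _ _ _
      rw [h1, h2] at heq
      cases heq
  | some Sβ =>
    obtain ⟨S, β⟩ := Sβ
    have hS2 : 2 ≤ S.card := hInv.lockCard S β rfl
    obtain ⟨q₁, hq₁, q₂, hq₂, hqne⟩ := Finset.one_lt_card.mp (show 1 < S.card by omega)
    have hlnd : (ρ.map Prod.fst ++ [q₁, q₂]).Nodup := by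
      rw [List.nodup_append]
      refine ⟨hnd, by simpa using hqne, ?_⟩
      intro q hq q' hq' hqq
      have : q' = q₁ ∨ q' = q₂ := by simpa using hq'
      rcases this with h | h
      · rw [hqq, h] at hq; exact hInv.lockDisj S β rfl _ hq₁ hq
      · rw [hqq, h] at hq; exact hInv.lockDisj S β rfl _ hq₂ hq
    have hllen : (ρ.map Prod.fst ++ [q₁, q₂]).length = ρ.length + 2 := by simp
    set π := extPerm (ρ.map Prod.fst ++ [q₁, q₂]) hlnd with hπ
    set w : Fin n → Bool := fun i =>
      if h : (i : ℕ) < ρ.length then (ρ[(i:ℕ)]'h).2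
      else if (i : ℕ) = ρ.length then β q₁
      else if (i : ℕ) = ρ.length + 1 then !(β q₂) else true with hw
    set w' : Fin n → Bool := Function.update w ⟨ρ.length + 2, by omega⟩ false with hw'
    have hwweq : ∀ i : Fin n, (i : ℕ) < ρ.length + 2 → w' i = w i := by
      intro i hi
      rw [hw']
      apply Function.update_of_ne
      intro hc
      have := congrArg Fin.val hc
      simp only [Fin.val_mk] at this
      omega
    have hget0 : (ρ.map Prod.fst ++ [q₁, q₂])[ρ.length]'(by omega) = q₁ := by
      rw [List.getElem_append_right (by simp : (ρ.map Prod.fst).length ≤ ρ.length)]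
      simp
    have hget1 : (ρ.map Prod.fst ++ [q₁, q₂])[ρ.length + 1]'(by omega) = q₂ := by
      rw [List.getElem_append_right (by simp : (ρ.map Prod.fst).length ≤ ρ.length + 1)]
      simp
    have hπ0 : ∀ (hkn : ρ.length < n), π ⟨ρ.length, hkn⟩ = q₁ := by
      intro hkn
      rw [hπ, extPerm_apply hlnd ρ.length (by omega) hkn, hget0]
    have hπ1 : ∀ (hkn : ρ.length + 1 < n), π ⟨ρ.length + 1, hkn⟩ = q₂ := by
      intro hkn
      rw [hπ, extPerm_apply hlnd (ρ.length + 1) (by omega) hkn, hget1]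
    have hwk : ∀ (hkn : ρ.length < n), w ⟨ρ.length, hkn⟩ = β q₁ := by
      intro hkn
      show (if h : ((⟨ρ.length, hkn⟩ : Fin n) : ℕ) < ρ.length then _
        else if ((⟨ρ.length, hkn⟩ : Fin n) : ℕ) = ρ.length then β q₁
        else if ((⟨ρ.length, hkn⟩ : Fin n) : ℕ) = ρ.length + 1 then !(β q₂) else true) = β q₁
      simp
    have hwk1 : ∀ (hkn : ρ.length + 1 < n), w ⟨ρ.length + 1, hkn⟩ = !(β q₂) := by
      intro hkn
      show (if h : ((⟨ρ.length + 1, hkn⟩ : Fin n) : ℕ) < ρ.length then _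
        else if ((⟨ρ.length + 1, hkn⟩ : Fin n) : ℕ) = ρ.length then β q₁
        else if ((⟨ρ.length + 1, hkn⟩ : Fin n) : ℕ) = ρ.length + 1 then !(β q₂) else true)
        = !(β q₂)
      have h1 : ¬ (ρ.length + 1 < ρ.length) := by omega
      have h2 : ¬ (ρ.length + 1 = ρ.length) := by omega
      simp [h1, h2]
    have hwlow : ∀ (i : ℕ) (hi : i < ρ.length) (hin : i < n),
        w ⟨i, hin⟩ = (ρ[i]'hi).2 := by
      intro i hi hin
      show (if h : ((⟨i, hin⟩ : Fin n) : ℕ) < ρ.length then (ρ[((⟨i, hin⟩ : Fin n) : ℕ)]'h).2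
        else _) = (ρ[i]'hi).2
      simp only [Fin.val_mk, dif_pos hi]
    have hprefix : ∀ (wf : Fin n → Bool),
        (∀ i : Fin n, (i : ℕ) < ρ.length + 2 → wf i = w i) →
        (∀ (i : ℕ) (hi : i < ρ.length) (hin : i < n),
          π ⟨i, hin⟩ = (ρ[i]'hi).1 ∧ (fun p => wf (π.symm p)) ((ρ[i]'hi).1) = (ρ[i]'hi).2) := by
      intro wf hwf i hi hin
      have hπi : π ⟨i, hin⟩ = (ρ[i]'hi).1 := by
        rw [hπ, extPerm_apply hlnd i (by rw [hllen]; omega) hin]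
        rw [List.getElem_append_left (by simpa using hi)]
        simp
      refine ⟨hπi, ?_⟩
      have hsymm : π.symm ((ρ[i]'hi).1) = ⟨i, hin⟩ := by
        rw [← hπi]; exact Equiv.symm_apply_apply π _
      show wf (π.symm ((ρ[i]'hi).1)) = (ρ[i]'hi).2
      rw [hsymm, hwf ⟨i, hin⟩ (by simp only [Fin.val_mk]; omega)]
      exact hwlow i hi hin
    have hlock : ∀ (wf : Fin n → Bool),
        (∀ i : Fin n, (i : ℕ) < ρ.length + 2 → wf i = w i) →
        ∀ S' β', (some (S, β) : Option (Finset (Fin n) × (Fin n → Bool))) = some (S', β') →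
          ∀ (hkn : ρ.length < n) (hkn1 : ρ.length + 1 < n),
          (π ⟨ρ.length, hkn⟩ ∈ S'
            ∧ (fun p => wf (π.symm p)) (π ⟨ρ.length, hkn⟩) = β' (π ⟨ρ.length, hkn⟩))
          ∧ (π ⟨ρ.length + 1, hkn1⟩ ∈ S'
            ∧ (fun p => wf (π.symm p)) (π ⟨ρ.length + 1, hkn1⟩)
              = !(β' (π ⟨ρ.length + 1, hkn1⟩))) := by
      intro wf hwf S' β' h hkn hkn1
      obtain ⟨rfl, rfl⟩ : S = S' ∧ β = β' := by
        injection h with h'; exact ⟨congrArg Prod.fst h', congrArg Prod.snd h'⟩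
      refine ⟨⟨?_, ?_⟩, ?_, ?_⟩
      · rw [hπ0]; exact hq₁
      · show wf (π.symm (π ⟨ρ.length, hkn⟩)) = β (π ⟨ρ.length, hkn⟩)
        rw [Equiv.symm_apply_apply, hwf _ (by simp only [Fin.val_mk]; omega), hπ0, hwk]
      · rw [hπ1]; exact hq₂
      · show wf (π.symm (π ⟨ρ.length + 1, hkn1⟩)) = !(β (π ⟨ρ.length + 1, hkn1⟩))
        rw [Equiv.symm_apply_apply, hwf _ (by simp only [Fin.val_mk]; omega), hπ1, hwk1]
    refine ⟨fun p => w (π.symm p), fun p => w' (π.symm p), π, ?_, ?_, ?_⟩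
    · exact ⟨fun i hi hin => hprefix w (fun _ _ => rfl) i hi hin,
        hlock w (fun _ _ => rfl)⟩
    · exact ⟨fun i hi hin => hprefix w' hwweq i hi hin, hlock w' hwweq⟩
    · intro hcontra
      have hfin : ρ.length + 2 < n := by omega
      have heq := congrFun hcontra (π ⟨ρ.length + 2, hfin⟩)
      rw [Equiv.symm_apply_apply] at heq
      have h1 : w ⟨ρ.length + 2, hfin⟩ = true := by
        have ha : ¬ (ρ.length + 2 < ρ.length) := by omega
        have hb : ¬ (ρ.length + 2 = ρ.length) := by omega
        have hc : ¬ (ρ.length + 2 = ρ.length + 1) := by omega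
        simp only [hw]
        simp [ha, hb, hc]
      have h2 : w' ⟨ρ.length + 2, hfin⟩ = false := by
        rw [hw']; exact Function.update_self _ _ _
      rw [h1, h2] at heq
      cases heq

/-- The main engine: within `T` queries (where `8T < nD`, `2^(D+2) ≤ n`),
the adversary keeps two distinct secrets consistent, so `g` identifies neither. -/
lemma not_identifies {D T : ℕ} (hD : 1 ≤ D) (hTD : 8 * T < n * D) (hpow2 : 2^(D+2) ≤ n) :
    ∃ (z : Fin n → Bool) (π : Equiv.Perm (Fin n)), ¬ Identifies n g z π T := by
  obtain ⟨hInv, hC⟩ := grand g hD hTD hpow2 T (le_refl T)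
  have hn8 : 8 ≤ n := by
    have : (2:ℕ)^3 ≤ 2^(D+2) := Nat.pow_le_pow_right (by norm_num) (by omega)
    omega
  have hkD : (runAdv g T).1.1.length * D ≤ 4 * T := kD_le_of_count hInv hC
  have h2k : 2 * (runAdv g T).1.1.length < n := by
    have h3 : (2 * (runAdv g T).1.1.length) * D < n * D := by
      calc (2 * (runAdv g T).1.1.length) * D
          = 2 * ((runAdv g T).1.1.length * D) := by ring
      _ ≤ 8 * T := by omega
      _ < n * D := hTD
    exact Nat.lt_of_mul_lt_mul_right h3
  have hk2 : (runAdv g T).1.1.length + 2 < n := by omega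
  obtain ⟨z, z', π, hf, hf', hne⟩ := exists_two (runAdv g T).1 hInv hk2
  have hist_eq : ∀ t, t ≤ T → histScores n g z π t = (runAdv g t).2 := by
    intro t
    induction t with
    | zero => intro _; rfl
    | succ t ih =>
      intro ht
      have h1 := ih (by omega)
      show histScores n g z π t ++ [score n z π (g (histScores n g z π t))]
          = (runAdv g (t+1)).2
      rw [runAdv_succ_snd, h1]
      congr 1
      rw [show g (runAdv g t).2 = qryAt g t from rfl]
      rw [score_all g hD hTD hpow2 hf t (by omega)]
  refine ⟨z, π, ?_⟩
  intro hId
  have hhyp : ∀ k < T, score n z' π (g (histScores n g z π k)) =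
      score n z π (g (histScores n g z π k)) := by
    intro k hk
    rw [hist_eq k (by omega)]
    rw [show g (runAdv g k).2 = qryAt g k from rfl]
    rw [score_all g hD hTD hpow2 hf' k hk, score_all g hD hTD hpow2 hf k hk]
  obtain ⟨hzz, -⟩ := hId z' π hhyp
  exact hne hzz.symm

end HPAdv

/-- The deterministic query complexity of the HiddenPermutation problem is `Ω(n log n)`:
for some `c > 0` and all large enough `n`, every deterministic strategy fails to identify
some secret within `⌊c · n · log₂ n⌋` queries (i.e. at least two distinct secrets are
consistent with the produced guessing history). -/
theorem deterministic_lower_bound :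
    ∃ c : ℝ, 0 < c ∧ ∃ N : ℕ, ∀ n : ℕ, N ≤ n →
      ∀ g : List ℕ → Fin n → Bool,
        ∃ (z : Fin n → Bool) (π : Equiv.Perm (Fin n)),
          ¬ Identifies n g z π ⌊c * n * Real.logb 2 n⌋₊ := by
  refine ⟨1/64, by norm_num, 1024, ?_⟩
  intro n hn g
  have hn0 : 0 < n := by omega
  set L := Nat.log 2 n with hLdef
  set D := L - 2 with hDdef
  have hL10 : 10 ≤ L := by
    rw [hLdef]
    have h10 : (2:ℕ)^10 ≤ n := by norm_num; omega
    exact (Nat.le_log_iff_pow_le (by norm_num) (by omega)).mpr h10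
  have hD1 : 1 ≤ D := by omega
  have hpow2 : 2^(D+2) ≤ n := by
    have hDL : D + 2 = L := by omega
    rw [hDL, hLdef]
    exact Nat.pow_log_le_self 2 (by omega)
  set T := ⌊(1/64 : ℝ) * n * Real.logb 2 n⌋₊ with hTdef
  have hTD : 8 * T < n * D := by
    have hnR : (0:ℝ) < n := by exact_mod_cast hn0
    have hlogb_nonneg : (0:ℝ) ≤ Real.logb 2 n :=
      Real.logb_nonneg (by norm_num) (by exact_mod_cast (by omega : 1 ≤ n))
    have hTreal : (T:ℝ) ≤ (1/64) * n * Real.logb 2 n := by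
      rw [hTdef]
      exact Nat.floor_le (by positivity)
    have hlogb_lt : Real.logb 2 n < (L:ℝ) + 1 := by
      have hpow : (n:ℝ) < (2:ℝ)^((L + 1 : ℕ):ℝ) := by
        rw [Real.rpow_natCast]
        exact_mod_cast Nat.lt_pow_succ_log_self (by norm_num : 1 < 2) n
      have := (Real.logb_lt_iff_lt_rpow (by norm_num : (1:ℝ) < 2) hnR).mpr hpow
      calc Real.logb 2 n < ((L + 1 : ℕ):ℝ) := this
      _ = (L:ℝ) + 1 := by push_cast; ring
    have hLR : (10:ℝ) ≤ (L:ℝ) := by exact_mod_cast hL10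
    have hDR : (D:ℝ) = (L:ℝ) - 2 := by
      have h2L : 2 ≤ L := by omega
      rw [hDdef]
      push_cast [Nat.cast_sub h2L]
      ring
    have key : 8 * (T:ℝ) < (n:ℝ) * D := by
      rw [hDR]
      calc 8 * (T:ℝ) ≤ 8 * ((1/64) * n * Real.logb 2 n) := by linarith
      _ = n * Real.logb 2 n / 8 := by ring
      _ < n * ((L:ℝ) + 1) / 8 := by
          have := mul_lt_mul_of_pos_left hlogb_lt hnR
          linarith
      _ ≤ n * ((L:ℝ) - 2) := by nlinarith [mul_nonneg hnR.le (by linarith : (0:ℝ) ≤ 7 * (L:ℝ) - 17)]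
    have : ((8 * T : ℕ):ℝ) < ((n * D : ℕ):ℝ) := by push_cast; linarith
    exact_mod_cast this
  obtain ⟨z, π, hni⟩ := HPAdv.not_identifies g hD1 hTD hpow2
  exact ⟨z, π, hni⟩
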